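/- Let α, V, μ, γ, β > 0 and let (M*, C*) with M* > 0, C* > 0 satisfy α·V·C*² = μ·M* and γ = β·C* + V·C*·M*. Let M, C : [0,∞) → ℝ be differentiable with M'(t) = α·V·C(t)² − μ·M(t) and C'(t) = γ − β·C(t) − V·C(t)·M(t) for all t ≥ 0. Then the function L(t) := (M(t) − M*)² + 2α·(C(t) − C*)² satisfies, for every t ≥ 0, L'(t) = −2μ·(M(t) − M*)² − 4αβ·(C(t) − C*)² − 2α·V·(C(t) − C*)²·(M(t) + M*). In particular, if M(t) ≥ 0 for all t, then L'(t) < 0 whenever (M(t), C(t)) ≠ (M*, C*). -/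

import Mathlib

/-- The Lyapunov function `L(t) = (M(t) − M*)² + 2α(C(t) − C*)²` of the planar system
`M' = α V C² − μ M`, `C' = γ − β C − V C M` satisfies
`L'(t) = −2μ(M − M*)² − 4αβ(C − C*)² − 2αV(C − C*)²(M + M*)`; in particular, if `M ≥ 0`,
then `L' < 0` off the equilibrium. -/
theorem stmt9 (α V μ γ β Mstar Cstar : ℝ)
    (hα : 0 < α) (hV : 0 < V) (hμ : 0 < μ) (hγ : 0 < γ) (hβ : 0 < β)
    (hMstar : 0 < Mstar) (hCstar : 0 < Cstar)
    (heq1 : α * V * Cstar ^ 2 = μ * Mstar)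
    (heq2 : γ = β * Cstar + V * Cstar * Mstar)
    (M C : ℝ → ℝ)
    (hM : ∀ t, 0 ≤ t → HasDerivAt M (α * V * C t ^ 2 - μ * M t) t)
    (hC : ∀ t, 0 ≤ t → HasDerivAt C (γ - β * C t - V * C t * M t) t) :
    (∀ t, 0 ≤ t → HasDerivAt
      (fun s => (M s - Mstar) ^ 2 + 2 * α * (C s - Cstar) ^ 2)
      (-2 * μ * (M t - Mstar) ^ 2 - 4 * α * β * (C t - Cstar) ^ 2 -
        2 * α * V * (C t - Cstar) ^ 2 * (M t + Mstar)) t) ∧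
    ((∀ t, 0 ≤ t → 0 ≤ M t) → ∀ t, 0 ≤ t → (M t, C t) ≠ (Mstar, Cstar) →
      -2 * μ * (M t - Mstar) ^ 2 - 4 * α * β * (C t - Cstar) ^ 2 -
        2 * α * V * (C t - Cstar) ^ 2 * (M t + Mstar) < 0) := by
  constructor
  · intro t ht
    have h1 := ((hM t ht).sub_const Mstar).pow 2
    have h2 := (((hC t ht).sub_const Cstar).pow 2).const_mul (2 * α)
    have := h1.add h2
    refine this.congr_deriv ?_
    subst heq2
    linear_combination (2 * M t - 2 * Mstar) * heq1
  · intro hMnn t ht hne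
    have hM0 := hMnn t ht
    rcases ne_or_eq (M t) Mstar with h | h
    · nlinarith [mul_pos hμ (sq_pos_of_ne_zero (sub_ne_zero.mpr h)),
        mul_nonneg (mul_nonneg hα.le hβ.le) (sq_nonneg (C t - Cstar)),
        mul_nonneg (mul_nonneg (mul_nonneg hα.le hV.le) (sq_nonneg (C t - Cstar))) (add_nonneg hM0 hMstar.le)]
    · have hc : C t ≠ Cstar := fun hc => hne (by rw [h, hc])
      nlinarith [mul_pos (mul_pos hα hβ) (sq_pos_of_ne_zero (sub_ne_zero.mpr hc)),
        mul_nonneg hμ.le (sq_nonneg (M t - Mstar)),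
        mul_nonneg (mul_nonneg (mul_nonneg hα.le hV.le) (sq_nonneg (C t - Cstar))) (add_nonneg hM0 hMstar.le)]
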